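/- For every integer d ≥ 3, there is a unique value x_d ∈ (0,1) such that h_d(x_d) = 0. -/

import Mathlib

open Real

/-- The function $g_d(x,z)$ from the paper. -/
noncomputable def gFun (d : ℕ) (x z : ℝ) : ℝ :=
  ((d : ℝ)/2 - 1 - d * z) * x * Real.log x
    + ((d : ℝ) - 1) * (1 - x) * Real.log ((1 - x)/2)
    - 2 * d * x * z * Real.log z
    - (1 - 2*z) * d * x / 2 * Real.log (1 - 2*z)
    - d * ((1 - x)/2 - z * x) * Real.log ((1 - x)/2 - z * x)

/-- The maximizer $z_0(x) = \frac{1-\sqrt{1-2(1-x)x}}{2x}$. -/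
noncomputable def z0 (x : ℝ) : ℝ := (1 - Real.sqrt (1 - 2 * (1 - x) * x)) / (2 * x)

/-- The function $h_d(x) = g_d(x, z_0(x))$. -/
noncomputable def hFun (d : ℕ) (x : ℝ) : ℝ := gFun d x (z0 x)

namespace Stmt14

noncomputable def Pfun (x : ℝ) : ℝ :=
  (x - 1/2) * Real.log x + (1 - x) * Real.log ((1 - x)/2)
    - (1 - x) * Real.log (z0 x) + ((1 - 2*x)/2) * Real.log (1 - 2 * z0 x)

noncomputable def Efun (x : ℝ) : ℝ :=
  -(x * Real.log x) - (1 - x) * Real.log ((1 - x)/2)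

noncomputable def Pd (x : ℝ) : ℝ :=
  Real.log x + Real.log (z0 x) - Real.log ((1 - x)/2) - Real.log (1 - 2 * z0 x)

noncomputable def Ed (x : ℝ) : ℝ := Real.log ((1 - x)/2) - Real.log x

section facts
variable {x : ℝ} (hx0 : 0 < x) (hx1 : x < 1)

lemma R_pos : (0:ℝ) < 1 - 2 * (1 - x) * x := by nlinarith [sq_nonneg (1 - 2*x)]

lemma R_lt_one (hx0 : 0 < x) (hx1 : x < 1) : 1 - 2 * (1 - x) * x < 1 := by nlinarith

noncomputable def rr (x : ℝ) : ℝ := Real.sqrt (1 - 2 * (1 - x) * x)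

lemma rr_sq : rr x ^ 2 = 1 - 2 * (1 - x) * x := Real.sq_sqrt (le_of_lt R_pos)

lemma rr_pos : 0 < rr x := Real.sqrt_pos.mpr R_pos

lemma rr_lt_one (hx0 : 0 < x) (hx1 : x < 1) : rr x < 1 := by
  rw [show (1:ℝ) = Real.sqrt 1 by simp]
  exact Real.sqrt_lt_sqrt (le_of_lt R_pos) (R_lt_one hx0 hx1)

lemma rr_gt_one_sub (hx0 : 0 < x) (hx1 : x < 1) : 1 - x < rr x := by
  nlinarith [rr_sq (x := x), rr_pos (x := x)]

lemma rr_gt_x (hx0 : 0 < x) (hx1 : x < 1) : x < rr x := by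
  nlinarith [rr_sq (x := x), rr_pos (x := x)]

lemma rr_gt (hx0 : 0 < x) (hx1 : x < 1) : 2*x - 1 < rr x := by
  nlinarith [rr_sq (x := x), rr_pos (x := x)]

lemma z0_eq : z0 x = (1 - rr x) / (2 * x) := rfl

lemma z0_alt (hx0 : 0 < x) (hx1 : x < 1) : z0 x = (1 - x) / (1 + rr x) := by
  rw [z0_eq]
  have h0 := rr_pos (x := x)
  have h1 : (0:ℝ) < 1 + rr x := by linarith
  have hrsq := rr_sq (x := x)
  field_simp
  ring_nf
  linear_combination (-1 : ℝ) * hrsq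

lemma z0_pos (hx0 : 0 < x) (hx1 : x < 1) : 0 < z0 x := by
  rw [z0_alt hx0 hx1]
  have h := rr_pos (x := x)
  have h1 : (0:ℝ) < 1 - x := by linarith
  positivity

lemma one_sub_two_z0 (hx0 : 0 < x) (hx1 : x < 1) : 1 - 2 * z0 x = (x - 1 + rr x) / x := by
  rw [z0_eq]; field_simp; ring

lemma one_sub_two_z0_pos (hx0 : 0 < x) (hx1 : x < 1) : 0 < 1 - 2 * z0 x := by
  rw [one_sub_two_z0 hx0 hx1]
  have h := rr_gt_one_sub hx0 hx1
  apply div_pos (by linarith) hx0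

lemma one_sub_two_z0_lt_x (hx0 : 0 < x) (hx1 : x < 1) : 1 - 2 * z0 x < x := by
  rw [one_sub_two_z0 hx0 hx1]
  rw [div_lt_iff₀ hx0]
  nlinarith [rr_sq (x := x), rr_pos (x := x), rr_lt_one hx0 hx1]

lemma s_eq (hx0 : 0 < x) (hx1 : x < 1) :
    (1 - x)/2 - z0 x * x = x * z0 x ^ 2 / (1 - 2 * z0 x) := by
  have h2z := one_sub_two_z0_pos hx0 hx1
  rw [eq_div_iff (ne_of_gt h2z), z0_eq]
  have hrsq := rr_sq (x := x)
  have hxne : x ≠ 0 := ne_of_gt hx0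
  field_simp
  ring_nf
  linear_combination (1) * hrsq

lemma s_pos (hx0 : 0 < x) (hx1 : x < 1) : 0 < (1 - x)/2 - z0 x * x := by
  rw [s_eq hx0 hx1]
  have h1 := one_sub_two_z0_pos hx0 hx1
  have h2 := z0_pos hx0 hx1
  positivity

end facts

section decomp
variable {x : ℝ}

lemma log_s (hx0 : 0 < x) (hx1 : x < 1) :
    Real.log ((1 - x)/2 - z0 x * x)
      = Real.log x + 2 * Real.log (z0 x) - Real.log (1 - 2 * z0 x) := by
  have hz := z0_pos hx0 hx1
  have h2z := one_sub_two_z0_pos hx0 hx1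
  rw [s_eq hx0 hx1]
  rw [Real.log_div (by positivity) (ne_of_gt h2z)]
  rw [Real.log_mul (ne_of_gt hx0) (by positivity)]
  rw [Real.log_pow]
  push_cast
  ring

lemma hFun_decomp (d : ℕ) (hx0 : 0 < x) (hx1 : x < 1) :
    hFun d x = d * Pfun x + Efun x := by
  unfold hFun gFun Pfun Efun
  rw [show Real.log ((1 - x)/2 - z0 x * x) = Real.log x + 2 * Real.log (z0 x) - Real.log (1 - 2 * z0 x) from log_s hx0 hx1]
  ring

end decomp

section deriv
variable {x : ℝ}

lemma hasDerivAt_z0 (hx0 : 0 < x) (hx1 : x < 1) :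
    HasDerivAt z0 ((1 - x - rr x)/(2 * x^2 * rr x)) x := by
  have hR := R_pos (x := x)
  have hr0 := rr_pos (x := x)
  have hrsq := rr_sq (x := x)
  have hD : HasDerivAt (fun y : ℝ => 1 - 2 * (1 - y) * y) (-(2 * ((-1) * x + (1 - x) * 1))) x := by
    have h := (((hasDerivAt_id x).const_sub 1).mul (hasDerivAt_id x)).const_mul 2 |>.const_sub 1
    simpa [mul_assoc] using h
  have hsqrt := (Real.hasDerivAt_sqrt (ne_of_gt hR)).comp x hD
  have hnum := hsqrt.const_sub 1
  have hden : HasDerivAt (fun y : ℝ => 2 * y) 2 x := by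
    simpa using (hasDerivAt_id x).const_mul 2
  have hq := hnum.div hden (by positivity)
  have hz : z0 = fun y : ℝ => (1 - Real.sqrt (1 - 2 * (1 - y) * y))/(2 * y) := rfl
  rw [hz]
  refine HasDerivAt.congr_deriv hq ?_
  simp only [Function.comp_apply, id_eq]
  have hrr : Real.sqrt (1 - 2 * (1 - x) * x) = rr x := rfl
  rw [hrr]
  have hxne : x ≠ 0 := ne_of_gt hx0
  have hrne : rr x ≠ 0 := ne_of_gt hr0
  field_simp
  ring_nf
  linear_combination (1) * hrsq

lemma hasDerivAt_Efun (hx0 : 0 < x) (hx1 : x < 1) :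
    HasDerivAt Efun (Ed x) x := by
  have hu : (0:ℝ) < (1 - x)/2 := by linarith
  have h1 : HasDerivAt (fun y : ℝ => y * Real.log y) (1 * Real.log x + x * x⁻¹) x :=
    (hasDerivAt_id x).mul (Real.hasDerivAt_log (ne_of_gt hx0))
  have hu' : HasDerivAt (fun y : ℝ => (1 - y)/2) (-1/2) x := by
    simpa using ((hasDerivAt_id x).const_sub 1).div_const 2
  have h2 : HasDerivAt (fun y : ℝ => Real.log ((1 - y)/2)) (((1 - x)/2)⁻¹ * (-1/2)) x := by
    have := (Real.hasDerivAt_log (ne_of_gt hu)).comp x hu'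
    simpa [Function.comp_def] using this
  have h3 : HasDerivAt (fun y : ℝ => (1 - y) * Real.log ((1 - y)/2))
      ((-1) * Real.log ((1 - x)/2) + (1 - x) * (((1 - x)/2)⁻¹ * (-1/2))) x :=
    ((hasDerivAt_id x).const_sub 1).mul h2
  have h := (h1.neg).sub h3
  have hE : Efun = fun y : ℝ => -(y * Real.log y) - (1 - y) * Real.log ((1 - y)/2) := rfl
  rw [hE]
  refine HasDerivAt.congr_deriv h ?_
  have e1 : x * x⁻¹ = 1 := mul_inv_cancel₀ (ne_of_gt hx0)
  have e2 : (1 - x) * (((1 - x)/2)⁻¹ * (-1/2)) = -1 := by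
    have : (1:ℝ) - x ≠ 0 := by linarith
    field_simp
  rw [e1, e2, Ed]
  ring

lemma hasDerivAt_Pfun (hx0 : 0 < x) (hx1 : x < 1) :
    HasDerivAt Pfun (Pd x) x := by
  have hu : (0:ℝ) < (1 - x)/2 := by linarith
  have hr0 := rr_pos (x := x)
  have hr1 := rr_lt_one hx0 hx1
  have hr2 := rr_gt_one_sub hx0 hx1
  have hrsq := rr_sq (x := x)
  have hz0 := z0_pos hx0 hx1
  have h2z := one_sub_two_z0_pos hx0 hx1
  set zd : ℝ := (1 - x - rr x)/(2 * x^2 * rr x) with hzd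
  have hz := hasDerivAt_z0 hx0 hx1
  have h1 : HasDerivAt (fun y : ℝ => (y - 1/2) * Real.log y)
      (1 * Real.log x + (x - 1/2) * x⁻¹) x :=
    ((hasDerivAt_id x).sub_const (1/2)).mul (Real.hasDerivAt_log (ne_of_gt hx0))
  have hu' : HasDerivAt (fun y : ℝ => (1 - y)/2) (-1/2) x := by
    simpa using ((hasDerivAt_id x).const_sub 1).div_const 2
  have h2l : HasDerivAt (fun y : ℝ => Real.log ((1 - y)/2)) (((1 - x)/2)⁻¹ * (-1/2)) x := by
    have := (Real.hasDerivAt_log (ne_of_gt hu)).comp x hu'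
    simpa [Function.comp_def] using this
  have h2 : HasDerivAt (fun y : ℝ => (1 - y) * Real.log ((1 - y)/2))
      ((-1) * Real.log ((1 - x)/2) + (1 - x) * (((1 - x)/2)⁻¹ * (-1/2))) x :=
    ((hasDerivAt_id x).const_sub 1).mul h2l
  have h3l : HasDerivAt (fun y : ℝ => Real.log (z0 y)) ((z0 x)⁻¹ * zd) x := by
    have := (Real.hasDerivAt_log (ne_of_gt hz0)).comp x hz
    simpa [Function.comp_def] using this
  have h3 : HasDerivAt (fun y : ℝ => (1 - y) * Real.log (z0 y))
      ((-1) * Real.log (z0 x) + (1 - x) * ((z0 x)⁻¹ * zd)) x :=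
    ((hasDerivAt_id x).const_sub 1).mul h3l
  have h4a : HasDerivAt (fun y : ℝ => (1 - 2*y)/2) (-1) x := by
    have h := (((hasDerivAt_id x).const_mul 2).const_sub 1).div_const 2
    have h' : HasDerivAt (fun y : ℝ => (1 - 2*y)/2) (-(2*1)/2) x := by simpa using h
    exact h'.congr_deriv (by norm_num)
  have h4b : HasDerivAt (fun y : ℝ => 1 - 2 * z0 y) (-(2 * zd)) x := by
    simpa using (hz.const_mul 2).const_sub 1
  have h4l : HasDerivAt (fun y : ℝ => Real.log (1 - 2 * z0 y))
      ((1 - 2 * z0 x)⁻¹ * (-(2 * zd))) x := by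
    have := (Real.hasDerivAt_log (ne_of_gt h2z)).comp x h4b
    simpa [Function.comp_def] using this
  have h4 : HasDerivAt (fun y : ℝ => ((1 - 2*y)/2) * Real.log (1 - 2 * z0 y))
      ((-1) * Real.log (1 - 2 * z0 x) + ((1 - 2*x)/2) * ((1 - 2 * z0 x)⁻¹ * (-(2 * zd)))) x :=
    h4a.mul h4l
  have h := ((h1.add h2).sub h3).add h4
  have hP : Pfun = fun y : ℝ => (y - 1/2) * Real.log y + (1 - y) * Real.log ((1 - y)/2)
      - (1 - y) * Real.log (z0 y) + ((1 - 2*y)/2) * Real.log (1 - 2 * z0 y) := rfl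
  rw [hP]
  refine HasDerivAt.congr_deriv h ?_
  have key : (x - 1/2) * x⁻¹ + (1 - x) * (((1 - x)/2)⁻¹ * (-1/2))
      - (1 - x) * ((z0 x)⁻¹ * zd) + ((1 - 2*x)/2) * ((1 - 2 * z0 x)⁻¹ * (-(2 * zd))) = 0 := by
    have hzval : z0 x = (1 - rr x)/(2*x) := rfl
    have h2zval : 1 - 2 * z0 x = (x - 1 + rr x)/x := one_sub_two_z0 hx0 hx1
    rw [h2zval, hzval, hzd]
    have hxne : x ≠ 0 := ne_of_gt hx0
    have hrne : rr x ≠ 0 := ne_of_gt hr0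
    have hne1 : 1 - rr x ≠ 0 := by linarith
    have hne2 : x - 1 + rr x ≠ 0 := by linarith
    have hne3 : (1:ℝ) - x ≠ 0 := by linarith
    field_simp
    ring_nf
    linear_combination (x + rr x - 1) * hrsq
  rw [Pd]
  linear_combination key

lemma hasDerivAt_hFun (d : ℕ) (hx0 : 0 < x) (hx1 : x < 1) :
    HasDerivAt (hFun d) ((d : ℝ) * Pd x + Ed x) x := by
  have h := ((hasDerivAt_Pfun hx0 hx1).const_mul (d:ℝ)).add (hasDerivAt_Efun hx0 hx1)
  apply h.congr_of_eventuallyEq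
  have hmem : Set.Ioo (0:ℝ) 1 ∈ nhds x := isOpen_Ioo.mem_nhds ⟨hx0, hx1⟩
  filter_upwards [hmem] with y hy
  exact hFun_decomp d hy.1 hy.2

lemma log_lt (hx0 : 0 < x) (hx1 : x < 1) : Real.log (1 - 2 * z0 x) < Real.log x :=
  Real.log_lt_log (one_sub_two_z0_pos hx0 hx1) (one_sub_two_z0_lt_x hx0 hx1)

lemma hasDerivAt_F (d : ℕ) (hx0 : 0 < x) (hx1 : x < 1) :
    HasDerivAt (fun y => hFun d y / (1 - y))
      ((((d : ℝ)/2) * (Real.log x - Real.log (1 - 2 * z0 x)) - Real.log x) / (1 - x)^2) x := by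
  have h1x : (1:ℝ) - x ≠ 0 := by linarith
  have hden : HasDerivAt (fun y : ℝ => 1 - y) (-1) x := (hasDerivAt_id x).const_sub 1
  have h := (hasDerivAt_hFun d hx0 hx1).div hden h1x
  refine h.congr_deriv ?_
  have hdec := hFun_decomp d hx0 hx1
  rw [hdec, Pd, Ed]
  unfold Pfun Efun
  ring

lemma K_pos (d : ℕ) (hx0 : 0 < x) (hx1 : x < 1) :
    0 < ((d : ℝ)/2) * (Real.log x - Real.log (1 - 2 * z0 x)) - Real.log x := by
  have h1 := log_lt hx0 hx1
  have h2 : Real.log x < 0 := Real.log_neg hx0 hx1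
  have h3 : (0:ℝ) ≤ (d : ℝ)/2 := by positivity
  nlinarith

lemma F_strictMono (d : ℕ) :
    StrictMonoOn (fun y => hFun d y / (1 - y)) (Set.Ioo (0:ℝ) 1) := by
  apply strictMonoOn_of_deriv_pos (convex_Ioo 0 1)
  · intro y hy
    exact (hasDerivAt_F d hy.1 hy.2).continuousAt.continuousWithinAt
  · rw [interior_Ioo]
    intro y hy
    rw [(hasDerivAt_F d hy.1 hy.2).deriv]
    have hK := K_pos d hy.1 hy.2
    have : (0:ℝ) < (1 - y)^2 := by nlinarith [hy.2]
    positivity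

end deriv

section signs
variable {x : ℝ}

lemma Pfun_bound (hx0 : 0 < x) (hx2 : x ≤ 1/2) :
    Pfun x ≤ 2*x - ((1 - 2*x)/2) * Real.log 2 := by
  have hx1 : x < 1 := by linarith
  have hr0 := rr_pos (x := x)
  have hr1 := rr_lt_one hx0 hx1
  have hrsq := rr_sq (x := x)
  have hu : (0:ℝ) < (1 - x)/2 := by linarith
  have hz0 := z0_pos hx0 hx1
  have h2z := one_sub_two_z0_pos hx0 hx1
  -- (a) log u ≤ log z
  have ha : Real.log ((1 - x)/2) ≤ Real.log (z0 x) := by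
    apply Real.log_le_log hu
    rw [z0_alt hx0 hx1]
    rw [div_le_div_iff₀ (by norm_num) (by linarith)]
    nlinarith
  -- (b) log (1 - 2 z) ≤ log x - log 2 + 4x
  have hb : Real.log (1 - 2 * z0 x) ≤ Real.log x - Real.log 2 + 4*x := by
    have hrle : rr x ≤ 1 - x + x^2/2 + x^3 := by
      have hB : (0:ℝ) ≤ 1 - x + x^2/2 + x^3 := by nlinarith
      have hfac : (0:ℝ) ≤ x^3*(1 - 7/4*x + x^2 + x^3) := by
        apply mul_nonneg (by positivity)
        nlinarith [sq_nonneg x, pow_pos hx0 3]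
      have h := Real.sqrt_le_sqrt (show 1 - 2*(1 - x)*x ≤ (1 - x + x^2/2 + x^3)^2 by nlinarith [hfac])
      rw [Real.sqrt_sq hB] at h
      exact h
    have h1 : 1 - 2 * z0 x ≤ x/2 * (1 + 4*x) := by
      rw [one_sub_two_z0 hx0 hx1, div_le_iff₀ hx0]
      nlinarith
    have h2 : Real.log (1 - 2 * z0 x) ≤ Real.log (x/2 * (1 + 4*x)) :=
      Real.log_le_log h2z h1
    have h3 : Real.log (x/2 * (1 + 4*x)) = Real.log x - Real.log 2 + Real.log (1 + 4*x) := by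
      rw [Real.log_mul (by positivity) (by positivity), Real.log_div (ne_of_gt hx0) (by norm_num)]
    have h4 : Real.log (1 + 4*x) ≤ 4*x := by
      have := Real.log_le_sub_one_of_pos (show (0:ℝ) < 1 + 4*x by linarith)
      linarith
    linarith
  unfold Pfun
  have hc1 : (1 - x) * Real.log ((1 - x)/2) - (1 - x) * Real.log (z0 x) ≤ 0 := by nlinarith
  have hc2 : ((1 - 2*x)/2) * Real.log (1 - 2 * z0 x)
      ≤ ((1 - 2*x)/2) * (Real.log x - Real.log 2 + 4*x) := by
    apply mul_le_mul_of_nonneg_left hb; linarith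
  nlinarith [hc1, hc2]

lemma Efun_bound (hx0 : 0 < x) (hx2 : x ≤ 1/2) :
    Efun x ≤ -(x * Real.log x) + Real.log 2 + 2*x := by
  have hx1 : x < 1 := by linarith
  have h1x : (0:ℝ) < 1 - x := by linarith
  unfold Efun
  have h1 : Real.log ((1 - x)/2) = Real.log (1 - x) - Real.log 2 := by
    rw [Real.log_div (ne_of_gt h1x) (by norm_num)]
  have h2 : -Real.log (1 - x) ≤ 2*x := by
    have := Real.log_le_sub_one_of_pos (show (0:ℝ) < (1 - x)⁻¹ by positivity)
    rw [Real.log_inv] at this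
    have hinv : (1 - x)⁻¹ - 1 ≤ 2*x := by
      rw [inv_eq_one_div, div_sub' (ne_of_gt h1x)]
      rw [div_le_iff₀ h1x]
      nlinarith
    linarith
  have h3 : (0:ℝ) ≤ -Real.log (1 - x) := by
    have : Real.log (1 - x) ≤ 0 := Real.log_nonpos (by linarith) (by linarith)
    linarith
  have h4 : (1 - x) * (-Real.log (1 - x)) ≤ 2*x := by nlinarith
  have h5 : (1 - x) * Real.log 2 ≤ Real.log 2 := by
    nlinarith [Real.log_pos (by norm_num : (1:ℝ) < 2)]
  nlinarith

lemma neg_x_log_x (hx0 : 0 < x) : -(x * Real.log x) ≤ 2 * Real.sqrt x := by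
  have hs : 0 < Real.sqrt x := Real.sqrt_pos.mpr hx0
  have h1 : Real.log (Real.sqrt x)⁻¹ ≤ (Real.sqrt x)⁻¹ - 1 :=
    Real.log_le_sub_one_of_pos (by positivity)
  rw [Real.log_inv, Real.log_sqrt (le_of_lt hx0)] at h1
  -- -(1/2) log x ≤ 1/√x - 1  →  -x log x ≤ 2x/√x - 2x ≤ 2√x
  have h2 : -Real.log x ≤ 2 * (Real.sqrt x)⁻¹ := by linarith
  have h3 : x * (Real.sqrt x)⁻¹ = Real.sqrt x := by
    rw [inv_eq_one_div, mul_one_div]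
    rw [show x = Real.sqrt x * Real.sqrt x from (Real.mul_self_sqrt (le_of_lt hx0)).symm]
    field_simp
    rw [Real.sqrt_sq hs.le]
  nlinarith [h2, hs, hx0]

lemma neg_point_gen (d : ℕ) (hd3 : (3:ℝ) ≤ (d:ℝ)) {x : ℝ} (hx0 : 0 < x)
    (hx300 : x ≤ 1/300) (hdx : (d:ℝ) * x = 1/100) : hFun d x < 0 := by
  have hx2 : x ≤ 1/2 := by linarith
  have hx1 : x < 1 := by linarith
  have hP := Pfun_bound hx0 hx2
  have hE := Efun_bound hx0 hx2
  have hsq : Real.sqrt x ≤ 1/17 := by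
    rw [show (1/17:ℝ) = Real.sqrt ((1/17)^2) by rw [Real.sqrt_sq]; norm_num]
    apply Real.sqrt_le_sqrt; nlinarith
  have hxl := neg_x_log_x hx0
  have hL1 : (0.6931471803:ℝ) < Real.log 2 := Real.log_two_gt_d9
  have hL2 : Real.log 2 < 0.6931471808 := Real.log_two_lt_d9
  rw [hFun_decomp d hx0 hx1]
  have hdP : (d:ℝ) * Pfun x ≤ (d:ℝ) * (2*x - ((1 - 2*x)/2) * Real.log 2) := by
    apply mul_le_mul_of_nonneg_left hP; positivity
  have hexp : (d:ℝ) * (2*x - ((1 - 2*x)/2) * Real.log 2)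
      = 2/100 - ((d:ℝ)/2) * Real.log 2 + (1/100) * Real.log 2 := by
    have h : (d:ℝ) * (2*x - ((1 - 2*x)/2) * Real.log 2)
        = 2*((d:ℝ)*x) - ((d:ℝ)/2) * Real.log 2 + ((d:ℝ)*x) * Real.log 2 := by ring
    rw [h, hdx]; norm_num
  have hdL : 3 * 0.6931471803 ≤ (d:ℝ) * Real.log 2 := by nlinarith
  have hdP2 : (d:ℝ) * Pfun x ≤ 2/100 - ((d:ℝ)/2) * Real.log 2 + (1/100) * Real.log 2 := by
    linarith
  linarith [hdP2, hE, hxl, hsq, hx300]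

set_option maxHeartbeats 1600000 in
lemma pos_point_gen (d : ℕ) (hd3 : (3:ℝ) ≤ (d:ℝ)) {x : ℝ} (hx34 : 3/4 ≤ x)
    (hx1 : x < 1) (hdx : (d:ℝ) * (1 - x) = 1/4) : 0 < hFun d x := by
  have hx0 : (0:ℝ) < x := by linarith
  have hr0 := rr_pos (x := x)
  have hrsq := rr_sq (x := x)
  have hrx := rr_gt_x hx0 hx1
  have hu : (0:ℝ) < (1 - x)/2 := by linarith
  have hz0 := z0_pos hx0 hx1
  have h2z := one_sub_two_z0_pos hx0 hx1
  have h1x : (0:ℝ) < 1 - x := by linarith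
  have hid : Pfun x + (1 - x) * Pd x
      = (1/2) * (Real.log x - Real.log (1 - 2 * z0 x)) := by
    unfold Pfun Pd; ring
  have hidpos : 0 < Pfun x + (1 - x) * Pd x := by
    rw [hid]
    have := log_lt hx0 hx1
    linarith
  -- Pd bound
  have hPd : Pd x ≤ 4/3 * (x * (1 - x)) := by
    have hstep : Pd x = Real.log ((x * z0 x) / ((1 - x)/2 * (1 - 2 * z0 x))) := by
      rw [Real.log_div (by positivity) (by positivity),
        Real.log_mul (ne_of_gt hx0) (ne_of_gt hz0),
        Real.log_mul (ne_of_gt hu) (ne_of_gt h2z), Pd]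
      ring
    rw [hstep]
    have hzv : z0 x = (1 - x)/(1 + rr x) := z0_alt hx0 hx1
    have h2zv : 1 - 2 * z0 x = (x - 1 + rr x)/x := one_sub_two_z0 hx0 hx1
    have hA : (0:ℝ) < 1 + rr x := by linarith
    have hB : (0:ℝ) < x - 1 + rr x := by linarith
    have hDpos : (0:ℝ) < (1 - x)/2 * (1 - 2 * z0 x) := by positivity
    have harg : (x * z0 x) / ((1 - x)/2 * (1 - 2 * z0 x)) ≤ 1 + 4/3 * (x * (1 - x)) := by
      rw [div_le_iff₀ hDpos, h2zv, hzv]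
      rw [show x * ((1 - x)/(1 + rr x)) = x * (1 - x) / (1 + rr x) by ring]
      rw [show (1 + 4/3 * (x * (1 - x))) * ((1 - x)/2 * ((x - 1 + rr x)/x))
          = (1 + 4/3 * (x * (1 - x))) * ((1 - x) * (x - 1 + rr x)) / (2*x) by ring]
      rw [div_le_div_iff₀ hA (by positivity)]
      -- polynomial inequality
      have e4 : (0:ℝ) ≤ (1 - x) * (4*x^2 - 4/3*x - 1) := by
        apply mul_nonneg (le_of_lt h1x)
        nlinarith [hx34]
      have e2 : 2*x ≤ (1 + 4/3*(x*(1-x))) * (2*x - 1 + rr x) := by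
        nlinarith [e4, mul_pos (show (0:ℝ) < 1 + 4/3*(x*(1-x)) by positivity) (sub_pos.mpr hrx)]
      have e3 : (1 + 4/3*(x*(1-x))) * ((1 - x) * (x - 1 + rr x)) * (1 + rr x)
          = (x*(1-x)) * ((1 + 4/3*(x*(1-x))) * (2*x - 1 + rr x)) := by
        linear_combination ((1 + 4/3*(x*(1-x))) * (1-x)) * hrsq
      have e5 := mul_le_mul_of_nonneg_left e2 (le_of_lt (mul_pos hx0 h1x))
      linarith [e5, e3]
    have hlog := Real.log_le_sub_one_of_pos
      (show (0:ℝ) < (x * z0 x) / ((1 - x)/2 * (1 - 2 * z0 x)) by positivity)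
    linarith
  -- E lower bound
  have hElow : x * (1 - x) ≤ Efun x := by
    unfold Efun
    have h1 : Real.log x ≤ x - 1 := Real.log_le_sub_one_of_pos hx0
    have h2 : Real.log ((1 - x)/2) ≤ 0 := Real.log_nonpos (by linarith) (by linarith)
    nlinarith
  rw [hFun_decomp d hx0 hx1]
  have hd0 : (0:ℝ) < (d:ℝ) := by linarith
  have hstep1 : (d:ℝ) * Pfun x > (d:ℝ) * (-(1 - x) * Pd x) := by
    apply mul_lt_mul_of_pos_left _ hd0
    linarith
  have hstep2 : (d:ℝ) * (-(1 - x) * Pd x) ≥ (d:ℝ) * (-(1 - x) * (4/3 * (x * (1 - x)))) := by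
    apply mul_le_mul_of_nonneg_left _ (le_of_lt hd0)
    nlinarith [hPd, h1x]
  have hfin : (d:ℝ) * (-(1 - x) * (4/3 * (x * (1 - x))))
      = -(4/3) * (x * (1 - x)) * ((d:ℝ) * (1 - x)) := by ring
  rw [hdx] at hfin
  nlinarith [hstep1, hstep2, hElow, hfin, hx34, h1x, hx1]

end signs

end Stmt14

/-- For every integer $d \ge 3$ there is a unique $x_d \in (0,1)$ with
$h_d(x_d) = 0$. -/
theorem hFun_existsUnique_root (d : ℕ) (hd : 3 ≤ d) :
    ∃! x : ℝ, x ∈ Set.Ioo (0 : ℝ) 1 ∧ hFun d x = 0 := by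
  have hd3 : (3:ℝ) ≤ (d:ℝ) := by exact_mod_cast hd
  have hd0 : (0:ℝ) < (d:ℝ) := by linarith
  have hx1pos : (0:ℝ) < 1/(100*(d:ℝ)) := by positivity
  have hx1le : 1/(100*(d:ℝ)) ≤ 1/300 := by
    rw [div_le_div_iff₀ (by positivity) (by norm_num)]
    linarith
  have hneg : hFun d (1/(100*(d:ℝ))) < 0 :=
    Stmt14.neg_point_gen d hd3 hx1pos hx1le (by field_simp)
  have hq0 : (0:ℝ) < 1/(4*(d:ℝ)) := by positivity
  have hqle : 1/(4*(d:ℝ)) ≤ 1/12 := by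
    rw [div_le_div_iff₀ (by positivity) (by norm_num)]
    linarith
  have hx2lt : 1 - 1/(4*(d:ℝ)) < 1 := by linarith
  have hx234 : (3:ℝ)/4 ≤ 1 - 1/(4*(d:ℝ)) := by linarith
  have hpos : 0 < hFun d (1 - 1/(4*(d:ℝ))) :=
    Stmt14.pos_point_gen d hd3 hx234 hx2lt (by field_simp; ring)
  have h12 : 1/(100*(d:ℝ)) < 1 - 1/(4*(d:ℝ)) := by linarith
  have hcont : ContinuousOn (hFun d) (Set.Icc (1/(100*(d:ℝ))) (1 - 1/(4*(d:ℝ)))) := by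
    intro y hy
    have hy0 : 0 < y := lt_of_lt_of_le hx1pos hy.1
    have hy1 : y < 1 := lt_of_le_of_lt hy.2 hx2lt
    exact (Stmt14.hasDerivAt_hFun d hy0 hy1).continuousAt.continuousWithinAt
  have hivt := intermediate_value_Ioo (le_of_lt h12) hcont
  obtain ⟨c, hcmem, hc⟩ := hivt (Set.mem_Ioo.mpr ⟨hneg, hpos⟩)
  have hc0 : 0 < c := lt_trans hx1pos hcmem.1
  have hc1 : c < 1 := lt_trans hcmem.2 hx2lt
  refine ⟨c, ⟨⟨hc0, hc1⟩, hc⟩, ?_⟩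
  rintro y ⟨hyIoo, hy0⟩
  apply (Stmt14.F_strictMono d).injOn hyIoo ⟨hc0, hc1⟩
  show hFun d y / (1 - y) = hFun d c / (1 - c)
  rw [hy0, hc]
  simp
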